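/- Let d ∈ ℕ, let K ⊆ ℝ^d be a compact set, and let φ : ℝ → ℝ be a continuous sigmoidal function. Then for every continuous function f : K → ℝ and every ε > 0 there exist q ∈ ℕ, coefficients β_1, …, β_q ∈ ℝ, weight vectors w^1, …, w^q ∈ ℝ^d and biases b_1, …, b_q ∈ ℝ such that |∑_{i=1}^q β_i φ(w^i · x + b_i) − f(x)| < ε for all x ∈ K; i.e., the one-hidden-layer network functions with activation φ are uniformly dense in C(K). -/

import Mathlib

open Filter Set Pointwise

private lemma sigmoid_bounded {φ : ℝ → ℝ} (hφc : Continuous φ)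
    (hφ1 : Tendsto φ atTop (nhds 1)) (hφ0 : Tendsto φ atBot (nhds 0)) :
    ∃ C : ℝ, 1 ≤ C ∧ ∀ t, |φ t| ≤ C := by
  have h1 : ∀ᶠ u in atTop, |φ u - 1| ≤ 1 := by
    have hb : ∀ᶠ y in nhds (1:ℝ), |y - 1| ≤ 1 :=
      Filter.eventually_of_mem (Metric.closedBall_mem_nhds 1 one_pos)
        (fun y hy => by simpa [Real.dist_eq] using hy)
    exact hφ1.eventually hb
  have h0 : ∀ᶠ u in atBot, |φ u| ≤ 1 := by
    have hb : ∀ᶠ y in nhds (0:ℝ), |y| ≤ 1 :=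
      Filter.eventually_of_mem (Metric.closedBall_mem_nhds 0 one_pos)
        (fun y hy => by simpa [Real.dist_eq] using hy)
    exact hφ0.eventually hb
  obtain ⟨A, hA⟩ := Filter.eventually_atTop.mp h1
  obtain ⟨B, hB⟩ := Filter.eventually_atBot.mp h0
  obtain ⟨C0, hC0⟩ := (isCompact_Icc : IsCompact (Icc (min B A) (max B A))).exists_bound_of_continuousOn
    hφc.continuousOn
  refine ⟨max C0 2, le_trans (by norm_num) (le_max_right _ _), fun t => ?_⟩
  rcases le_or_gt t (min B A) with ht | ht
  · have := hB t (le_trans ht (min_le_left _ _))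
    calc |φ t| ≤ 1 := this
    _ ≤ max C0 2 := le_trans (by norm_num) (le_max_right _ _)
  rcases le_or_gt (max B A) t with ht' | ht'
  · have := hA t (le_trans (le_max_right _ _) ht')
    calc |φ t| ≤ |φ t - 1| + 1 := by
          have := abs_add_le (φ t - 1) 1; simpa using this
    _ ≤ 1 + 1 := by linarith
    _ ≤ max C0 2 := le_trans (by norm_num) (le_max_right _ _)
  · have := hC0 t ⟨ht.le, ht'.le⟩
    calc |φ t| ≤ C0 := by simpa [Real.norm_eq_abs] using this
    _ ≤ max C0 2 := le_max_left _ _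

set_option maxHeartbeats 1000000 in
private lemma one_dim_approx_pos {φ : ℝ → ℝ} (hφc : Continuous φ)
    (hφ1 : Tendsto φ atTop (nhds 1)) (hφ0 : Tendsto φ atBot (nhds 0))
    {g : ℝ → ℝ} (hg : Continuous g) {M : ℝ} (hM : 0 < M) {ε : ℝ} (hε : 0 < ε) :
    ∃ (q : ℕ) (β a c : Fin q → ℝ),
      ∀ t ∈ Icc (-M) M, |(∑ i, β i * φ (a i * t + c i)) - g t| < ε := by
  obtain ⟨C, hC1, hC⟩ := sigmoid_bounded hφc hφ1 hφ0
  have hC0 : (0:ℝ) < C := lt_of_lt_of_le one_pos hC1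
  have hC2 : (0:ℝ) < C + 2 := by linarith
  set ε₁ : ℝ := ε / (2 * (C + 2)) with hε₁def
  have hε₁ : 0 < ε₁ := by positivity
  -- uniform continuity of g on the interval
  obtain ⟨δ, hδ0, hδ⟩ := Metric.uniformContinuousOn_iff_le.mp
    ((isCompact_Icc : IsCompact (Icc (-M) M)).uniformContinuousOn_of_continuous
      hg.continuousOn) ε₁ hε₁
  -- partition
  obtain ⟨n, hn⟩ := exists_nat_gt (2 * M / δ)
  have hn0 : 0 < n := by
    have h2 : (0:ℝ) < 2 * M / δ := by positivity
    exact_mod_cast Nat.cast_pos.mp (lt_trans h2 hn)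
  have hn0' : (0:ℝ) < n := Nat.cast_pos.mpr hn0
  set h : ℝ := 2 * M / n with hhdef
  have hh0 : 0 < h := by positivity
  have hhδ : h ≤ δ := by
    rw [hhdef, div_le_iff₀ hn0']
    have h2 := (div_lt_iff₀ hδ0).mp hn
    nlinarith
  have hnh : (n:ℝ) * h = 2 * M := by
    rw [hhdef]; field_simp
  set T : ℕ → ℝ := fun j => -M + j * h with hT
  set s : ℕ → ℝ := fun j => if j = 0 then -M - 1 else T j with hs
  set Δ : ℕ → ℝ := fun j => if j = 0 then g (T 0) else g (T j) - g (T (j-1)) with hΔ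
  set S : ℝ := ∑ j ∈ Finset.range n, |Δ j| with hSdef
  have hS0 : 0 ≤ S := Finset.sum_nonneg fun _ _ => abs_nonneg _
  set η : ℝ := ε / (2 * (S + 1)) with hηdef
  have hη0 : 0 < η := by positivity
  -- tails of φ
  have h1 : ∀ᶠ u in atTop, |φ u - 1| ≤ η := by
    have hb : ∀ᶠ y in nhds (1:ℝ), |y - 1| ≤ η :=
      Filter.eventually_of_mem (Metric.closedBall_mem_nhds 1 hη0)
        (fun y hy => by simpa [Real.dist_eq] using hy)
    exact hφ1.eventually hb
  obtain ⟨u₁, hu₁⟩ := Filter.eventually_atTop.mp h1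
  have h0 : ∀ᶠ u in atBot, |φ u| ≤ η := by
    have hb : ∀ᶠ y in nhds (0:ℝ), |y| ≤ η :=
      Filter.eventually_of_mem (Metric.closedBall_mem_nhds 0 hη0)
        (fun y hy => by simpa [Real.dist_eq] using hy)
    exact hφ0.eventually hb
  obtain ⟨u₂, hu₂⟩ := Filter.eventually_atBot.mp h0
  set r : ℝ := min (h/2) 1 with hrdef
  have hr0 : 0 < r := lt_min (by positivity) one_pos
  have hr1 : r ≤ 1 := min_le_right _ _
  have hrh : r ≤ h/2 := min_le_left _ _
  set U : ℝ := max u₁ (max (-u₂) 1) with hUdef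
  have hU1 : (1:ℝ) ≤ U := le_max_of_le_right (le_max_right _ _)
  set L : ℝ := U / r with hLdef
  have hL0 : 0 < L := div_pos (lt_of_lt_of_le one_pos hU1) hr0
  have hLr : L * r = U := by rw [hLdef]; field_simp
  set H : ℝ → ℝ := fun u => if 0 ≤ u then 1 else 0 with hHdef
  have keyfar : ∀ v : ℝ, r ≤ |v| → |φ (L * v) - H v| ≤ η := by
    intro v hv
    rcases le_or_gt r v with h' | h'
    · have hv0 : 0 ≤ v := le_trans hr0.le h'
      have : u₁ ≤ L * v := by
        have h1 : u₁ ≤ L * r := by rw [hLr]; exact le_max_left _ _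
        nlinarith
      have := hu₁ _ this
      simp only [hHdef]
      rw [if_pos hv0]
      exact this
    · have hvneg : v ≤ -r := by
        rcases le_or_gt 0 v with h'' | h''
        · exfalso; rw [abs_of_nonneg h''] at hv; linarith
        · rw [abs_of_neg h''] at hv; linarith
      have : L * v ≤ u₂ := by
        have h1 : -u₂ ≤ L * r := by rw [hLr]; exact le_max_of_le_right (le_max_left _ _)
        nlinarith
      have := hu₂ _ this
      simp only [hHdef]
      rw [if_neg (by linarith [hr0] : ¬ (0:ℝ) ≤ v)]
      simpa using this
  have keybnd : ∀ v : ℝ, |φ (L * v) - H v| ≤ C + 1 := by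
    intro v
    have h1 : |H v| ≤ 1 := by
      simp only [hHdef]; split_ifs <;> norm_num
    calc |φ (L * v) - H v| ≤ |φ (L * v)| + |H v| := abs_sub _ _
    _ ≤ C + 1 := add_le_add (hC _) h1
  -- the network
  refine ⟨n, fun i => Δ i, fun _ => L, fun i => -(L * s i), ?_⟩
  intro t ht
  obtain ⟨htl, htr⟩ := ht
  have htM0 : 0 ≤ t + M := by linarith
  rw [Fin.sum_univ_eq_sum_range (fun j => Δ j * φ (L * t + -(L * s j))) n]
  have hterm : ∀ j, L * t + -(L * s j) = L * (t - s j) := fun j => by ring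
  simp only [hterm]
  -- the index of the step
  set k : ℕ := min (n-1) ⌊(t+M)/h⌋₊ with hkdef
  have hkn1 : k ≤ n - 1 := min_le_left _ _
  have hkn : k < n := lt_of_le_of_lt hkn1 (Nat.sub_lt hn0 one_pos)
  have hA1 : (k:ℝ) * h ≤ t + M := by
    have hk2 : (k:ℝ) ≤ (t+M)/h := by
      calc (k:ℝ) ≤ (⌊(t+M)/h⌋₊ : ℝ) := Nat.cast_le.mpr (min_le_right _ _)
      _ ≤ (t+M)/h := Nat.floor_le (by positivity)
    calc (k:ℝ) * h ≤ ((t+M)/h) * h := mul_le_mul_of_nonneg_right hk2 hh0.le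
    _ = t + M := by field_simp
  have hTk_le : T k ≤ t := by
    simp only [hT]; linarith
  have hA2 : t - T k ≤ h := by
    rcases le_or_gt (⌊(t+M)/h⌋₊) (n-1) with hcase | hcase
    · have hk3 : k = ⌊(t+M)/h⌋₊ := min_eq_right hcase
      have hfl : (t+M)/h < (⌊(t+M)/h⌋₊ : ℝ) + 1 := Nat.lt_floor_add_one _
      have : t + M < ((k:ℝ) + 1) * h := by
        rw [hk3]
        calc t + M = ((t+M)/h) * h := by field_simp
        _ < ((⌊(t+M)/h⌋₊ : ℝ) + 1) * h := mul_lt_mul_of_pos_right hfl hh0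
      simp only [hT]; linarith
    · have hk3 : k = n - 1 := min_eq_left hcase.le
      have hcast : ((n-1 : ℕ):ℝ) = (n:ℝ) - 1 := by
        push_cast [Nat.cast_sub hn0]; ring
      simp only [hT, hk3, hcast]
      linarith [hnh]
  have hTk_mem : T k ∈ Icc (-M) M := by
    constructor
    · simp only [hT, le_add_iff_nonneg_right]; positivity
    · simp only [hT]
      have : (k:ℝ) * h ≤ (n:ℝ) * h :=
        mul_le_mul_of_nonneg_right (Nat.cast_le.mpr hkn.le) hh0.le
      nlinarith
  have hdistk : |t - T k| ≤ δ := by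
    rw [abs_of_nonneg (by linarith)]
    linarith
  have ht_mem : t ∈ Icc (-M) M := ⟨htl, htr⟩
  -- Heaviside values
  have hHval : ∀ j, j < n → H (t - s j) = if j ≤ k then 1 else 0 := by
    intro j hj
    rcases Nat.eq_zero_or_pos j with rfl | hj0
    · have h1 : (0:ℝ) ≤ t - s 0 := by simp only [hs, if_pos rfl]; linarith
      simp only [hHdef, if_pos h1, if_pos (Nat.zero_le k)]
    · have hsj : s j = T j := by simp only [hs, if_neg (Nat.pos_iff_ne_zero.mp hj0)]
      by_cases hjk : j ≤ k
      · have hTj : T j ≤ T k := by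
          simp only [hT]
          have : (j:ℝ) ≤ k := Nat.cast_le.mpr hjk
          nlinarith
        have : (0:ℝ) ≤ t - s j := by rw [hsj]; linarith
        simp only [hHdef, if_pos this, if_pos hjk]
      · have hfl : ⌊(t+M)/h⌋₊ < j := by
          rcases le_or_gt (⌊(t+M)/h⌋₊) (n-1) with hcase | hcase
          · have hk3 : k = ⌊(t+M)/h⌋₊ := min_eq_right hcase
            omega
          · have hk3 : k = n - 1 := min_eq_left hcase.le
            omega
        have h2 : (t+M)/h < j := (Nat.floor_lt (by positivity)).mp hfl
        have h3 : t + M < j * h := by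
          calc t + M = ((t+M)/h) * h := by field_simp
          _ < (j:ℝ) * h := mul_lt_mul_of_pos_right h2 hh0
        have : ¬ (0:ℝ) ≤ t - s j := by
          rw [hsj]; simp only [hT]; push_neg; linarith
        simp only [hHdef, if_neg this, if_neg hjk]
  -- step function value
  have htele : ∀ m : ℕ, ∑ j ∈ Finset.range (m+1), Δ j = g (T m) := by
    intro m
    induction m with
    | zero => simp [hΔ]
    | succ m ih =>
      rw [Finset.sum_range_succ, ih]
      simp only [hΔ, if_neg (Nat.succ_ne_zero m), Nat.succ_sub_one]
      ring
  have hSt : ∑ j ∈ Finset.range n, Δ j * H (t - s j) = g (T k) := by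
    have e1 : ∑ j ∈ Finset.range n, Δ j * H (t - s j)
        = ∑ j ∈ Finset.range n, (if j ≤ k then Δ j else 0) := by
      refine Finset.sum_congr rfl fun j hj => ?_
      rw [hHval j (Finset.mem_range.mp hj)]
      split_ifs <;> ring
    rw [e1]
    have e2 : ∑ j ∈ Finset.range n, (if j ≤ k then Δ j else 0)
        = ∑ j ∈ Finset.range (k+1), (if j ≤ k then Δ j else 0) := by
      refine (Finset.sum_subset (Finset.range_subset_range.mpr hkn) ?_).symm
      intro j _ hj
      have : k < j := by simpa [Finset.mem_range, Nat.lt_succ_iff] using hj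
      rw [if_neg (not_le.mpr this)]
    rw [e2]
    have e3 : ∑ j ∈ Finset.range (k+1), (if j ≤ k then Δ j else 0)
        = ∑ j ∈ Finset.range (k+1), Δ j := by
      refine Finset.sum_congr rfl fun j hj => ?_
      rw [if_pos (Nat.lt_succ_iff.mp (Finset.mem_range.mp hj))]
    rw [e3, htele k]
  -- jump size bound for j ≥ 1
  have hjump : ∀ j, 1 ≤ j → j < n → |Δ j| ≤ ε₁ := by
    intro j hj1 hjn
    have hj0 : j ≠ 0 := by omega
    have hcast : ((j-1 : ℕ):ℝ) = (j:ℝ) - 1 := by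
      push_cast [Nat.cast_sub hj1]; ring
    have hTj_mem : T j ∈ Icc (-M) M := by
      constructor
      · simp only [hT, le_add_iff_nonneg_right]; positivity
      · simp only [hT]
        have : (j:ℝ) * h ≤ (n:ℝ) * h :=
          mul_le_mul_of_nonneg_right (Nat.cast_le.mpr hjn.le) hh0.le
        nlinarith
    have hTj1_mem : T (j-1) ∈ Icc (-M) M := by
      constructor
      · simp only [hT, le_add_iff_nonneg_right]; positivity
      · simp only [hT, hcast]
        have : ((j:ℝ) - 1) * h ≤ (n:ℝ) * h := by
          have : (j:ℝ) ≤ n := Nat.cast_le.mpr hjn.le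
          nlinarith
        nlinarith
    have hd : dist (T j) (T (j-1)) ≤ δ := by
      rw [Real.dist_eq]
      simp only [hT, hcast]
      have : (-M + (j:ℝ) * h) - (-M + ((j:ℝ)-1) * h) = h := by ring
      rw [this, abs_of_nonneg hh0.le]
      exact hhδ
    have := hδ (T j) hTj_mem (T (j-1)) hTj1_mem hd
    simp only [hΔ, if_neg hj0]
    rwa [Real.dist_eq] at this
  -- no near index at j = 0
  have hnear0 : ¬ |t - s 0| < r := by
    push_neg
    have he : t - s 0 = t + M + 1 := by simp only [hs, if_pos rfl]; ring
    rw [he, abs_of_nonneg (by linarith)]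
    linarith
  -- split the error sum
  set e : ℕ → ℝ := fun j => |φ (L * (t - s j)) - H (t - s j)| with hedef
  set P : ℕ → Prop := fun j => |t - s j| < r with hPdef
  have hPdec : DecidablePred P := fun j => by unfold P; infer_instance
  have herr : ∑ j ∈ Finset.range n, |Δ j| * e j ≤ ε₁ * (C + 1) + S * η := by
    classical
    rw [← Finset.sum_filter_add_sum_filter_not (Finset.range n) P]
    have hnearcard : (Finset.filter P (Finset.range n)).card ≤ 1 := by
      rw [Finset.card_le_one]
      intro i hi j hj
      simp only [Finset.mem_filter, Finset.mem_range] at hi hj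
      by_contra hne
      have hi0 : i ≠ 0 := by rintro rfl; exact hnear0 hi.2
      have hj0 : j ≠ 0 := by rintro rfl; exact hnear0 hj.2
      have hsi : s i = T i := by simp only [hs, if_neg hi0]
      have hsj : s j = T j := by simp only [hs, if_neg hj0]
      have hlt : |T i - T j| < h := by
        calc |T i - T j| = |(t - s j) - (t - s i)| := by rw [hsi, hsj]; ring_nf
        _ ≤ |t - s j| + |t - s i| := abs_sub _ _
        _ < r + r := add_lt_add hj.2 hi.2
        _ ≤ h := by linarith
      have heq : T i - T j = ((i:ℝ) - j) * h := by simp only [hT]; ring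
      have h1le : (1:ℝ) ≤ |(i:ℝ) - j| := by
        rcases Nat.lt_or_ge i j with hlt' | hge
        · have : (i:ℝ) + 1 ≤ j := by exact_mod_cast hlt'
          rw [abs_sub_comm, abs_of_nonneg (by linarith)]; linarith
        · have hgt : j < i := lt_of_le_of_ne hge (Ne.symm hne)
          have : (j:ℝ) + 1 ≤ i := by exact_mod_cast hgt
          rw [abs_of_nonneg (by linarith)]; linarith
      rw [heq, abs_mul, abs_of_nonneg hh0.le] at hlt
      nlinarith
    have hnearsum : ∑ j ∈ Finset.filter P (Finset.range n), |Δ j| * e j ≤ ε₁ * (C + 1) := by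
      have hbd : ∀ j ∈ Finset.filter P (Finset.range n), |Δ j| * e j ≤ ε₁ * (C + 1) := by
        intro j hj
        simp only [Finset.mem_filter, Finset.mem_range] at hj
        have hj0 : j ≠ 0 := by rintro rfl; exact hnear0 hj.2
        have hj1 : 1 ≤ j := Nat.one_le_iff_ne_zero.mpr hj0
        exact mul_le_mul (hjump j hj1 hj.1) (keybnd _) (abs_nonneg _) hε₁.le
      calc ∑ j ∈ Finset.filter P (Finset.range n), |Δ j| * e j
          ≤ (Finset.filter P (Finset.range n)).card • (ε₁ * (C + 1)) :=
            Finset.sum_le_card_nsmul _ _ _ hbd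
      _ ≤ 1 • (ε₁ * (C + 1)) := by
            apply nsmul_le_nsmul_left (by positivity) hnearcard
      _ = ε₁ * (C + 1) := one_nsmul _
    have hfarsum : ∑ j ∈ Finset.filter (fun j => ¬ P j) (Finset.range n), |Δ j| * e j
        ≤ S * η := by
      have hbd : ∀ j ∈ Finset.filter (fun j => ¬ P j) (Finset.range n),
          |Δ j| * e j ≤ |Δ j| * η := by
        intro j hj
        simp only [Finset.mem_filter, Finset.mem_range] at hj
        exact mul_le_mul_of_nonneg_left (keyfar _ (not_lt.mp hj.2)) (abs_nonneg _)
      calc ∑ j ∈ Finset.filter (fun j => ¬ P j) (Finset.range n), |Δ j| * e j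
          ≤ ∑ j ∈ Finset.filter (fun j => ¬ P j) (Finset.range n), |Δ j| * η :=
            Finset.sum_le_sum hbd
      _ ≤ ∑ j ∈ Finset.range n, |Δ j| * η := by
            refine Finset.sum_le_sum_of_subset_of_nonneg (Finset.filter_subset _ _) ?_
            intro j _ _; positivity
      _ = S * η := by rw [hSdef, Finset.sum_mul]
    exact add_le_add hnearsum hfarsum
  -- assemble
  have htri : |(∑ j ∈ Finset.range n, Δ j * φ (L * (t - s j))) - g t|
      ≤ (∑ j ∈ Finset.range n, |Δ j| * e j) + ε₁ := by
    have h1 : |(∑ j ∈ Finset.range n, Δ j * φ (L * (t - s j)))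
        - (∑ j ∈ Finset.range n, Δ j * H (t - s j))|
        ≤ ∑ j ∈ Finset.range n, |Δ j| * e j := by
      rw [← Finset.sum_sub_distrib]
      calc |∑ j ∈ Finset.range n, (Δ j * φ (L * (t - s j)) - Δ j * H (t - s j))|
          ≤ ∑ j ∈ Finset.range n, |Δ j * φ (L * (t - s j)) - Δ j * H (t - s j)| :=
            Finset.abs_sum_le_sum_abs _ _
      _ = ∑ j ∈ Finset.range n, |Δ j| * e j := by
            refine Finset.sum_congr rfl fun j _ => ?_
            rw [← mul_sub, abs_mul]
    have h2 : |(∑ j ∈ Finset.range n, Δ j * H (t - s j)) - g t| ≤ ε₁ := by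
      rw [hSt]
      have := hδ (T k) hTk_mem t ht_mem (by rwa [Real.dist_eq, abs_sub_comm])
      rwa [Real.dist_eq] at this
    calc |(∑ j ∈ Finset.range n, Δ j * φ (L * (t - s j))) - g t|
        ≤ |(∑ j ∈ Finset.range n, Δ j * φ (L * (t - s j)))
            - (∑ j ∈ Finset.range n, Δ j * H (t - s j))|
          + |(∑ j ∈ Finset.range n, Δ j * H (t - s j)) - g t| := abs_sub_le _ _ _
    _ ≤ (∑ j ∈ Finset.range n, |Δ j| * e j) + ε₁ := add_le_add h1 h2
  have hfinal : (∑ j ∈ Finset.range n, |Δ j| * e j) + ε₁ < ε := by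
    have h1 : ε₁ * (C + 2) = ε / 2 := by
      rw [hε₁def]; field_simp
    have h2 : (S + 1) * η = ε / 2 := by
      rw [hηdef]; field_simp
    have h3 : S * η < ε / 2 := by nlinarith
    calc (∑ j ∈ Finset.range n, |Δ j| * e j) + ε₁ ≤ (ε₁ * (C + 1) + S * η) + ε₁ := by
          linarith [herr]
    _ = ε₁ * (C + 2) + S * η := by ring
    _ < ε / 2 + ε / 2 := by rw [h1]; linarith
    _ = ε := by ring
  exact lt_of_le_of_lt htri hfinal

private abbrev EE (d : ℕ) := EuclideanSpace ℝ (Fin d)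

private lemma cos_mul_cos' (u v : ℝ) :
    Real.cos u * Real.cos v = (2⁻¹ : ℝ) * Real.cos (u + v) + (2⁻¹ : ℝ) * Real.cos (u - v) := by
  rw [Real.cos_add, Real.cos_sub]; ring

private lemma one_dim_approx {φ : ℝ → ℝ} (hφc : Continuous φ)
    (hφ1 : Tendsto φ atTop (nhds 1)) (hφ0 : Tendsto φ atBot (nhds 0))
    {g : ℝ → ℝ} (hg : Continuous g) (M : ℝ) {ε : ℝ} (hε : 0 < ε) :
    ∃ (q : ℕ) (β a c : Fin q → ℝ),
      ∀ t ∈ Icc (-M) M, |(∑ i, β i * φ (a i * t + c i)) - g t| < ε := by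
  obtain ⟨q, β, a, c, hq⟩ := one_dim_approx_pos hφc hφ1 hφ0 hg
    (by positivity : (0:ℝ) < |M| + 1) hε
  refine ⟨q, β, a, c, fun t ht => hq t ?_⟩
  obtain ⟨h1, h2⟩ := ht
  constructor
  · have := le_abs_self M; linarith
  · have := le_abs_self M; linarith

/-- One-hidden-layer feedforward networks with a continuous sigmoidal
activation function are uniformly dense in the continuous functions on a compact
set `K ⊆ ℝ^d`. -/
theorem one_hidden_layer_sigmoidal_dense
    (d : ℕ) (K : Set (EuclideanSpace ℝ (Fin d))) (hK : IsCompact K)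
    (φ : ℝ → ℝ) (hφc : Continuous φ)
    (hφ1 : Filter.Tendsto φ Filter.atTop (nhds 1))
    (hφ0 : Filter.Tendsto φ Filter.atBot (nhds 0))
    (f : EuclideanSpace ℝ (Fin d) → ℝ) (hf : ContinuousOn f K)
    (ε : ℝ) (hε : 0 < ε) :
    ∃ (q : ℕ) (β : Fin q → ℝ) (w : Fin q → EuclideanSpace ℝ (Fin d)) (b : Fin q → ℝ),
      ∀ x ∈ K, |(∑ i : Fin q, β i * φ ((inner ℝ (w i) x : ℝ) + b i)) - f x| < ε := by
  have hCS : CompactSpace K := isCompact_iff_compactSpace.mp hK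
  -- the submodule of network functions on (EE d)
  set Net : Submodule ℝ ((EE d) → ℝ) :=
    Submodule.span ℝ {g : (EE d) → ℝ | ∃ w b, g = fun x => φ ((inner ℝ w x : ℝ) + b)} with hNetdef
  -- every cosine ridge function can be approximated by networks on K
  have hcos : ∀ (w : (EE d)) (b : ℝ) (δ : ℝ), 0 < δ →
      ∃ hfun ∈ Net, ∀ x ∈ K, |hfun x - Real.cos ((inner ℝ w x : ℝ) + b)| < δ := by
    intro w b δ hδ
    obtain ⟨M, hM⟩ := hK.exists_bound_of_continuousOn
      (((continuous_const.inner continuous_id).add continuous_const).continuousOn :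
        ContinuousOn (fun x : (EE d) => (inner ℝ w x : ℝ) + b) K)
    obtain ⟨q, β, a, c, hq⟩ := one_dim_approx hφc hφ1 hφ0 Real.continuous_cos M hδ
    refine ⟨fun x => ∑ i, β i * φ (a i * ((inner ℝ w x : ℝ) + b) + c i), ?_, ?_⟩
    · have heq : (fun x : (EE d) => ∑ i, β i * φ (a i * ((inner ℝ w x : ℝ) + b) + c i))
          = ∑ i : Fin q, β i • (fun x : (EE d) => φ ((inner ℝ (a i • w) x : ℝ) + (a i * b + c i))) := by
        funext x
        rw [Finset.sum_apply]
        refine Finset.sum_congr rfl fun i _ => ?_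
        simp only [Pi.smul_apply, smul_eq_mul, real_inner_smul_left]
        ring_nf
      rw [heq]
      exact Submodule.sum_mem _ fun i _ => Submodule.smul_mem _ _
        (Submodule.subset_span ⟨a i • w, a i * b + c i, rfl⟩)
    · intro x hx
      have hmem : (inner ℝ w x : ℝ) + b ∈ Icc (-M) M := by
        have := hM x hx
        rw [Real.norm_eq_abs] at this
        exact ⟨neg_le_of_abs_le this, le_of_abs_le this⟩
      exact hq _ hmem
  -- cosine ridge functions as continuous maps on K
  have contRidge : ∀ (w : (EE d)) (b : ℝ),
      Continuous (fun x : K => Real.cos ((inner ℝ w (x : (EE d)) : ℝ) + b)) := fun w b =>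
    Real.continuous_cos.comp (((continuous_const.inner continuous_id).add
      continuous_const).comp continuous_subtype_val)
  set A0 : Set C(K, ℝ) :=
    {g | ∃ (w : (EE d)) (b : ℝ), g = ContinuousMap.mk _ (contRidge w b)} with hA0def
  -- span of A0 is closed under multiplication
  have hone : (1 : C(K, ℝ)) ∈ Submodule.span ℝ A0 := by
    refine Submodule.subset_span ⟨0, 0, ?_⟩
    ext x
    simp [inner_zero_left]
  have hmulset : A0 * A0 ⊆ (Submodule.span ℝ A0 : Set C(K, ℝ)) := by
    rintro _ ⟨g1, hg1, g2, hg2, rfl⟩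
    obtain ⟨w1, b1, rfl⟩ := hg1
    obtain ⟨w2, b2, rfl⟩ := hg2
    have key : (ContinuousMap.mk _ (contRidge w1 b1)) * (ContinuousMap.mk _ (contRidge w2 b2))
        = (2⁻¹ : ℝ) • ContinuousMap.mk _ (contRidge (w1 + w2) (b1 + b2))
          + (2⁻¹ : ℝ) • ContinuousMap.mk _ (contRidge (w1 - w2) (b1 - b2)) := by
      ext x
      simp only [ContinuousMap.mul_apply, ContinuousMap.add_apply, ContinuousMap.smul_apply,
        ContinuousMap.coe_mk, smul_eq_mul]
      have e1 : (inner ℝ (w1 + w2) (x : (EE d)) : ℝ) + (b1 + b2)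
          = ((inner ℝ w1 (x : (EE d)) : ℝ) + b1) + ((inner ℝ w2 (x : (EE d)) : ℝ) + b2) := by
        rw [inner_add_left]; ring
      have e2 : (inner ℝ (w1 - w2) (x : (EE d)) : ℝ) + (b1 - b2)
          = ((inner ℝ w1 (x : (EE d)) : ℝ) + b1) - ((inner ℝ w2 (x : (EE d)) : ℝ) + b2) := by
        rw [inner_sub_left]; ring
      rw [e1, e2]
      exact cos_mul_cos' _ _
    show (ContinuousMap.mk _ (contRidge w1 b1)) * (ContinuousMap.mk _ (contRidge w2 b2))
      ∈ (Submodule.span ℝ A0 : Set C(↑K, ℝ))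
    rw [key]
    exact Submodule.add_mem _
      (Submodule.smul_mem _ _ (Submodule.subset_span ⟨w1 + w2, b1 + b2, rfl⟩))
      (Submodule.smul_mem _ _ (Submodule.subset_span ⟨w1 - w2, b1 - b2, rfl⟩))
  have hmul : ∀ x y : C(K, ℝ), x ∈ Submodule.span ℝ A0 → y ∈ Submodule.span ℝ A0 →
      x * y ∈ Submodule.span ℝ A0 := by
    intro x y hx hy
    have h1 : x * y ∈ Submodule.span ℝ A0 * Submodule.span ℝ A0 :=
      Submodule.mul_mem_mul hx hy
    rw [Submodule.span_mul_span] at h1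
    exact Submodule.span_le.mpr hmulset h1
  set A : Subalgebra ℝ C(K, ℝ) := (Submodule.span ℝ A0).toSubalgebra hone hmul with hAdef
  -- A separates points
  have hsep : A.SeparatesPoints := by
    intro x y hxy
    have hvne : (x : (EE d)) ≠ (y : (EE d)) := fun hc => hxy (Subtype.ext hc)
    set v : (EE d) := (x : (EE d)) - (y : (EE d)) with hvdef
    have hv0 : v ≠ 0 := sub_ne_zero.mpr hvne
    set cc : ℝ := ‖v‖ ^ 2 with hccdef
    have hcc0 : 0 < cc := by
      have := norm_pos_iff.mpr hv0
      positivity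
    set w : (EE d) := (Real.pi / (2 * cc)) • v with hwdef
    set b : ℝ := -(inner ℝ w (y : (EE d)) : ℝ) with hbdef
    have hwx : (inner ℝ w (x : (EE d)) : ℝ) + b = Real.pi / 2 := by
      have h1 : (inner ℝ w (x : (EE d)) : ℝ) - (inner ℝ w (y : (EE d)) : ℝ) = (inner ℝ w v : ℝ) := by
        rw [hvdef, inner_sub_right]
      have h2 : (inner ℝ w v : ℝ) = (Real.pi / (2 * cc)) * cc := by
        rw [hwdef, real_inner_smul_left, hccdef, real_inner_self_eq_norm_sq]
      rw [hbdef]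
      rw [sub_eq_add_neg] at h1
      rw [h1, h2]
      field_simp
    have hwy : (inner ℝ w (y : (EE d)) : ℝ) + b = 0 := by rw [hbdef]; ring
    refine ⟨_, ⟨ContinuousMap.mk _ (contRidge w b),
      Submodule.subset_span ⟨w, b, rfl⟩, rfl⟩, ?_⟩
    simp only [ContinuousMap.coe_mk, hwx, hwy, Real.cos_pi_div_two, Real.cos_zero]
    norm_num
  -- Stone–Weierstrass
  obtain ⟨⟨p, hpA⟩, hp⟩ := ContinuousMap.exists_mem_subalgebra_near_continuous_of_separatesPoints
    A hsep (K.restrict f) hf.restrict (ε / 2) (by linarith)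
  have hpspan : p ∈ Submodule.span ℝ A0 := hpA
  -- every element of the span of A0 is approximable by networks
  have happrox : ∀ p' ∈ Submodule.span ℝ A0, ∀ δ : ℝ, 0 < δ →
      ∃ hfun ∈ Net, ∀ x : K, |hfun (x : (EE d)) - p' x| < δ := by
    intro p' hp'
    induction hp' using Submodule.span_induction with
    | mem g hg =>
        intro δ hδ
        obtain ⟨w, b, rfl⟩ := hg
        obtain ⟨hfun, hmem, hcl⟩ := hcos w b δ hδ
        exact ⟨hfun, hmem, fun x => hcl (x : (EE d)) x.2⟩
    | zero =>
        intro δ hδ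
        exact ⟨0, Submodule.zero_mem _, fun x => by simpa using hδ⟩
    | add g1 g2 hg1 hg2 ih1 ih2 =>
        intro δ hδ
        obtain ⟨h1, hm1, hc1⟩ := ih1 (δ / 2) (by linarith)
        obtain ⟨h2, hm2, hc2⟩ := ih2 (δ / 2) (by linarith)
        refine ⟨h1 + h2, Submodule.add_mem _ hm1 hm2, fun x => ?_⟩
        have e1 : (h1 + h2) (x : (EE d)) - (g1 + g2) x
            = (h1 (x : (EE d)) - g1 x) + (h2 (x : (EE d)) - g2 x) := by
          simp [Pi.add_apply]; ring
        rw [e1]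
        calc |(h1 (x : (EE d)) - g1 x) + (h2 (x : (EE d)) - g2 x)|
            ≤ |h1 (x : (EE d)) - g1 x| + |h2 (x : (EE d)) - g2 x| := abs_add_le _ _
        _ < δ / 2 + δ / 2 := add_lt_add (hc1 x) (hc2 x)
        _ = δ := by ring
    | smul cc g hg ih =>
        intro δ hδ
        by_cases hc : cc = 0
        · subst hc
          exact ⟨0, Submodule.zero_mem _, fun x => by simpa using hδ⟩
        · obtain ⟨h1, hm1, hc1⟩ := ih (δ / |cc|) (by positivity)
          refine ⟨cc • h1, Submodule.smul_mem _ _ hm1, fun x => ?_⟩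
          have e1 : (cc • h1) (x : (EE d)) - (cc • g) x = cc * (h1 (x : (EE d)) - g x) := by
            simp [Pi.smul_apply, smul_eq_mul]; ring
          rw [e1, abs_mul]
          calc |cc| * |h1 (x : (EE d)) - g x| < |cc| * (δ / |cc|) :=
                mul_lt_mul_of_pos_left (hc1 x) (abs_pos.mpr hc)
          _ = δ := by field_simp
  obtain ⟨N, hNmem, hNcl⟩ := happrox p hpspan (ε / 2) (by linarith)
  rw [hNetdef] at hNmem
  obtain ⟨q, β, gfun, hsum⟩ := Submodule.mem_span_set'.mp hNmem
  choose wfun bfun hwb using fun i => (gfun i).2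
  refine ⟨q, β, wfun, bfun, fun x hx => ?_⟩
  have hval : (∑ i : Fin q, β i * φ ((inner ℝ (wfun i) x : ℝ) + bfun i)) = N x := by
    rw [← hsum, Finset.sum_apply]
    refine Finset.sum_congr rfl fun i _ => ?_
    rw [hwb i]
    simp [Pi.smul_apply, smul_eq_mul]
  rw [hval]
  have h1 := hNcl ⟨x, hx⟩
  have h2 := hp ⟨x, hx⟩
  rw [Real.norm_eq_abs] at h2
  have e2 : K.restrict f ⟨x, hx⟩ = f x := rfl
  calc |N x - f x| ≤ |N x - p ⟨x, hx⟩| + |p ⟨x, hx⟩ - f x| := abs_sub_le _ _ _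
  _ < ε / 2 + ε / 2 := by
      refine add_lt_add h1 ?_
      rw [← e2]
      convert h2 using 2
  _ = ε := by ring
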